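/- Suppose sequences $(\eta_\ell)$ and $(e_\ell)$ of nonnegative reals satisfy estimator reduction $\eta_{\ell+1}^2 \le \kappa\eta_\ell^2 + C_{\rm est} d_\ell^2$ with $0<\kappa<1$, reliability $e_\ell \le C_{\rm rel}\eta_\ell$, and quasi-orthogonality $\sum_{k=\ell}^{\ell+N} d_k^2 \le C(N) e_\ell^2$ for all $\ell,N$, where $d_k \ge 0$. Then $\sum_{k=\ell}^{\ell+N}\eta_k^2 \le D(N)\eta_\ell^2$ with $D(N) = 1 + \frac{\kappa + C_{\rm est}C(N-1)C_{\rm rel}^2}{1-\kappa}$. -/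

import Mathlib

open Finset

/-- Lemma `lem:Nsum0`: estimator reduction, reliability, and
quasi-orthogonality imply the summed estimator bound with
`D(N) = 1 + (κ + C_est C(N-1) C_rel²)/(1-κ)`. -/
theorem stmt_2 (η e d : ℕ → ℝ)
    (hη : ∀ ℓ, 0 ≤ η ℓ) (he : ∀ ℓ, 0 ≤ e ℓ) (hd : ∀ ℓ, 0 ≤ d ℓ)
    (κ Cest Crel : ℝ) (hκ0 : 0 < κ) (hκ1 : κ < 1) (hCest : 0 < Cest) (hCrel : 0 < Crel)
    (C : ℕ → ℝ) (hC : ∀ N, 0 ≤ C N)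
    (hred : ∀ ℓ : ℕ, (η (ℓ + 1)) ^ 2 ≤ κ * (η ℓ) ^ 2 + Cest * (d ℓ) ^ 2)
    (hrel : ∀ ℓ : ℕ, e ℓ ≤ Crel * η ℓ)
    (hqo : ∀ ℓ N : ℕ, ∑ k ∈ Finset.Icc ℓ (ℓ + N), (d k) ^ 2 ≤ C N * (e ℓ) ^ 2) :
    ∀ ℓ N : ℕ, 1 ≤ N →
      ∑ k ∈ Finset.Icc ℓ (ℓ + N), (η k) ^ 2 ≤
        (1 + (κ + Cest * C (N - 1) * Crel ^ 2) / (1 - κ)) * (η ℓ) ^ 2 := by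
  intro ℓ N hN
  obtain ⟨M, rfl⟩ : ∃ M, N = M + 1 := ⟨N - 1, by omega⟩
  simp only [Nat.add_sub_cancel]
  set S : ℝ := ∑ k ∈ Finset.Icc ℓ (ℓ + (M + 1)), (η k) ^ 2 with hS
  have hsplit : S = (η ℓ) ^ 2 + ∑ k ∈ Finset.Icc (ℓ + 1) (ℓ + (M + 1)), (η k) ^ 2 := by
    rw [hS, Finset.Icc_eq_cons_Ioc (by omega), Finset.sum_cons, ← Finset.Icc_add_one_left_eq_Ioc]
  -- reindex the tail sum
  have hreindex : ∑ k ∈ Finset.Icc (ℓ + 1) (ℓ + (M + 1)), (η k) ^ 2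
      = ∑ k ∈ Finset.Icc ℓ (ℓ + M), (η (k + 1)) ^ 2 := by
    have : ℓ + (M + 1) = (ℓ + M) + 1 := by omega
    rw [this, ← Finset.map_add_right_Icc, Finset.sum_map]
    simp [addRightEmbedding]
  have htail : ∑ k ∈ Finset.Icc ℓ (ℓ + M), (η (k + 1)) ^ 2
      ≤ κ * (∑ k ∈ Finset.Icc ℓ (ℓ + M), (η k) ^ 2)
        + Cest * (∑ k ∈ Finset.Icc ℓ (ℓ + M), (d k) ^ 2) := by
    rw [Finset.mul_sum, Finset.mul_sum, ← Finset.sum_add_distrib]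
    exact Finset.sum_le_sum fun k _ => hred k
  have hsub : ∑ k ∈ Finset.Icc ℓ (ℓ + M), (η k) ^ 2 ≤ S := by
    apply Finset.sum_le_sum_of_subset_of_nonneg
    · exact Finset.Icc_subset_Icc_right (by omega)
    · intro i _ _; positivity
  have hqo' : ∑ k ∈ Finset.Icc ℓ (ℓ + M), (d k) ^ 2 ≤ C M * (e ℓ) ^ 2 := hqo ℓ M
  have hrel' : (e ℓ) ^ 2 ≤ Crel ^ 2 * (η ℓ) ^ 2 := by
    have := hrel ℓ
    nlinarith [he ℓ, hη ℓ]
  have key : S ≤ (η ℓ) ^ 2 + κ * S + Cest * (C M * (Crel ^ 2 * (η ℓ) ^ 2)) := by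
    rw [hsplit, hreindex]
    have h1 : Cest * (∑ k ∈ Finset.Icc ℓ (ℓ + M), (d k) ^ 2)
        ≤ Cest * (C M * (Crel ^ 2 * (η ℓ) ^ 2)) := by
      apply mul_le_mul_of_nonneg_left _ hCest.le
      calc ∑ k ∈ Finset.Icc ℓ (ℓ + M), (d k) ^ 2 ≤ C M * (e ℓ) ^ 2 := hqo'
        _ ≤ C M * (Crel ^ 2 * (η ℓ) ^ 2) := mul_le_mul_of_nonneg_left hrel' (hC M)
    have h2 : κ * (∑ k ∈ Finset.Icc ℓ (ℓ + M), (η k) ^ 2) ≤ κ * S :=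
      mul_le_mul_of_nonneg_left hsub hκ0.le
    nlinarith [htail]
  have h1κ : 0 < 1 - κ := by linarith
  have hfin : (1 + (κ + Cest * C M * Crel ^ 2) / (1 - κ)) * η ℓ ^ 2
      = ((1 + Cest * (C M * Crel ^ 2)) / (1 - κ)) * η ℓ ^ 2 := by
    rw [add_div' _ _ _ h1κ.ne']
    ring_nf
  rw [hfin, div_mul_eq_mul_div, le_div_iff₀ h1κ]
  nlinarith [key]
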